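/- Let m ≥ 2 be an integer and set q² = 2^(2m+1). Then there exists a prime p with p ≠ 2, p ≠ 3, p coprime to q² − 1, and such that p divides q² + 1 or p divides q⁴ + 1; that is, there is a prime p ∉ {2, 3} with gcd(p, 2^(2m+1) − 1) = 1 and p ∣ 2^(2m+1) + 1 or p ∣ 2^(4m+2) + 1. -/
import Mathlib


/-- For `m ≥ 2` and `q² = 2^(2m+1)`: there exists a prime `p ∉ {2, 3}` coprime to
`q² − 1 = 2^(2m+1) − 1` such that `p ∣ q² + 1 = 2^(2m+1) + 1` or
`p ∣ q⁴ + 1 = 2^(4m+2) + 1`. -/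
theorem exists_prime_for_suzuki_ree (m : ℕ) (hm : 2 ≤ m) :
    ∃ p : ℕ, Nat.Prime p ∧ p ≠ 2 ∧ p ≠ 3 ∧
      Nat.Coprime p (2 ^ (2 * m + 1) - 1) ∧
      (p ∣ 2 ^ (2 * m + 1) + 1 ∨ p ∣ 2 ^ (4 * m + 2) + 1) := by
  set n := 2 ^ (4 * m + 2) + 1 with hn
  have h1 : 1 ≤ 2 ^ (2 * m + 1) := Nat.one_le_two_pow
  have hne : n ≠ 1 := by
    have : 0 < 2 ^ (4 * m + 2) := by positivity
    omega
  have hp : Nat.Prime n.minFac := Nat.minFac_prime hne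
  have hdvd : n.minFac ∣ n := Nat.minFac_dvd n
  have hodd : ¬ 2 ∣ n := by
    simp only [hn]
    intro h
    have : 2 ∣ 2 ^ (4 * m + 2) := dvd_pow_self 2 (by omega)
    omega
  have hmod3 : n % 3 = 2 := by
    have : 2 ^ (4 * m + 2) % 3 = 1 := by
      have : 2 ^ (4 * m + 2) = 4 ^ (2 * m + 1) := by
        rw [show (4:ℕ) = 2 ^ 2 by norm_num, ← pow_mul]; ring_nf
      rw [this, Nat.pow_mod]
      norm_num
    omega
  refine ⟨n.minFac, hp, ?_, ?_, ?_, Or.inr hdvd⟩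
  · intro h; exact hodd (h ▸ hdvd)
  · intro h
    have : 3 ∣ n := h ▸ hdvd
    omega
  · rw [Nat.Prime.coprime_iff_not_dvd hp]
    intro h
    have h4 : n.minFac ∣ 2 ^ (4 * m + 2) - 1 := by
      have : 2 ^ (4 * m + 2) - 1 = (2 ^ (2 * m + 1) - 1) * (2 ^ (2 * m + 1) + 1) := by
        have : 2 ^ (4 * m + 2) = 2 ^ (2 * m + 1) * 2 ^ (2 * m + 1) := by
          rw [← pow_add]; ring_nf
        rw [this]
        obtain ⟨k, hk⟩ := Nat.exists_eq_add_of_le h1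
        rw [hk]
        have : (1 + k) * (1 + k) = (1 + k - 1) * (1 + k + 1) + 1 := by
          simp [Nat.add_sub_cancel_left]; ring
        omega
      rw [this]; exact h.mul_right _
    have h2 : n.minFac ∣ 2 := by
      have hs := Nat.dvd_sub hdvd h4
      have h14 : 1 ≤ 2 ^ (4 * m + 2) := Nat.one_le_two_pow
      have he : n - (2 ^ (4 * m + 2) - 1) = 2 := by omega
      rwa [he] at hs
    have : n.minFac = 2 := (Nat.prime_dvd_prime_iff_eq hp Nat.prime_two).mp h2
    exact hodd (this ▸ hdvd)
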